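/- Let B and X be 2-nilpotent groups and let φ : B →* MulAut X be a group homomorphism, inducing the action b ∗ x = φ(b)(x). Then the semidirect product X ⋊[φ] B (with multiplication (x, b)·(x', b') = (x·(b ∗ x'), b b')) is 2-nilpotent if and only if for all b, b' ∈ B and all x ∈ X one has (b ∗ x)·x⁻¹ ∈ Z(X) and b' ∗ ((b ∗ x)·x⁻¹) = (b ∗ x)·x⁻¹. -/

import Mathlib

open scoped commutatorElement

section Aux
variable {B X : Type*} [Group B] [Group X]

lemma cen_move (z : X) (hz : z ∈ Subgroup.center X) (g h : X) :
    g * (z * h) = z * (g * h) := by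
  rw [← mul_assoc, Subgroup.mem_center_iff.mp hz g, mul_assoc]

lemma cen_commutator (z w x y : X) (hz : z ∈ Subgroup.center X)
    (hw : w ∈ Subgroup.center X) : ⁅z * x, w * y⁆ = ⁅x, y⁆ := by
  have hz' := Subgroup.inv_mem _ hz
  simp only [commutatorElement_def, mul_inv_rev, mul_assoc]
  rw [cen_move z⁻¹ hz' x⁻¹ (y⁻¹ * w⁻¹), cen_move z⁻¹ hz' y (x⁻¹ * (y⁻¹ * w⁻¹)),
    cen_move z⁻¹ hz' w (y * (x⁻¹ * (y⁻¹ * w⁻¹))), cen_move z⁻¹ hz' x _,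
    mul_inv_cancel_left, ← cen_move w hw y (x⁻¹ * (y⁻¹ * w⁻¹)),
    ← cen_move w hw x⁻¹ (y⁻¹ * w⁻¹), ← cen_move w hw y⁻¹ w⁻¹,
    mul_inv_cancel, mul_one]

variable (φ : B →* MulAut X)

lemma sdp_commutator_eq (x y : X) (b c : B) :
    (⁅(⟨x, b⟩ : X ⋊[φ] B), (⟨y, c⟩ : X ⋊[φ] B)⁆ : X ⋊[φ] B)
      = ⟨x * φ b y * φ (b * c * b⁻¹) x⁻¹ * φ (b * c * b⁻¹ * c⁻¹) y⁻¹, ⁅b, c⁆⟩ := by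
  ext <;> simp [commutatorElement_def, mul_assoc]

lemma aux_cancel (b : B) (u : X) : φ b (φ b⁻¹ u) = u := by
  rw [← MulAut.mul_apply, ← map_mul, mul_inv_cancel, map_one]; rfl

variable (hC : ∀ (b b' : B) (x : X),
    φ b x * x⁻¹ ∈ Subgroup.center X ∧ φ b' (φ b x * x⁻¹) = φ b x * x⁻¹)
include hC

lemma aux_comm (b c : B) (u : X) : φ b (φ c u) = φ c (φ b u) := by
  have e1 : φ b (φ c u) = (φ c u * u⁻¹) * φ b u := by
    conv_lhs => rw [show φ c u = (φ c u * u⁻¹) * u from (inv_mul_cancel_right _ _).symm]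
    rw [map_mul, (hC c b u).2]
  have e2 : φ c (φ b u) = (φ b u * u⁻¹) * φ c u := by
    conv_lhs => rw [show φ b u = (φ b u * u⁻¹) * u from (inv_mul_cancel_right _ _).symm]
    rw [map_mul, (hC b c u).2]
  rw [e1, e2]
  calc (φ c u * u⁻¹) * φ b u = (φ c u * u⁻¹) * ((φ b u * u⁻¹) * u) := by
        rw [inv_mul_cancel_right]
    _ = (φ b u * u⁻¹) * ((φ c u * u⁻¹) * u) := cen_move _ (hC b b u).1 _ _
    _ = (φ b u * u⁻¹) * φ c u := by rw [inv_mul_cancel_right]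

lemma aux_conj (b c : B) (u : X) : φ (b * c * b⁻¹) u = φ c u := by
  have h : φ (b * c * b⁻¹) u = φ b (φ c (φ b⁻¹ u)) := by simp [map_mul]
  rw [h, aux_comm φ hC, aux_cancel φ b u]

lemma aux_commutator_act (b c : B) (u : X) : φ (b * c * b⁻¹ * c⁻¹) u = u := by
  have h : φ (b * c * b⁻¹ * c⁻¹) u = φ (b * c * b⁻¹) (φ c⁻¹ u) := by simp [map_mul]
  rw [h, aux_conj φ hC, aux_cancel φ c u]

end Aux

theorem semidirect_nil2_iff (B X : Type*) [Group B] [Group X]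
    (hB : commutator B ≤ Subgroup.center B)
    (hX : commutator X ≤ Subgroup.center X)
    (φ : B →* MulAut X) :
    commutator (X ⋊[φ] B) ≤ Subgroup.center (X ⋊[φ] B) ↔
      ∀ (b b' : B) (x : X),
        φ b x * x⁻¹ ∈ Subgroup.center X ∧ φ b' (φ b x * x⁻¹) = φ b x * x⁻¹ := by
  constructor
  · intro h b b' x
    have hval : (⁅(⟨1, b⟩ : X ⋊[φ] B), (⟨x, 1⟩ : X ⋊[φ] B)⁆ : X ⋊[φ] B)
        = ⟨φ b x * x⁻¹, 1⟩ := by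
      rw [sdp_commutator_eq]; ext <;> simp
    have hc : (⟨φ b x * x⁻¹, (1 : B)⟩ : X ⋊[φ] B) ∈ Subgroup.center (X ⋊[φ] B) := by
      rw [← hval]
      exact h (Subgroup.commutator_mem_commutator (Subgroup.mem_top _) (Subgroup.mem_top _))
    rw [Subgroup.mem_center_iff] at hc
    constructor
    · rw [Subgroup.mem_center_iff]
      intro y
      have := congrArg SemidirectProduct.left (hc ⟨y, 1⟩)
      simpa using this
    · have := congrArg SemidirectProduct.left (hc ⟨1, b'⟩)
      simpa using this
  · intro hC
    rw [commutator_def, Subgroup.commutator_le]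
    rintro ⟨x, b⟩ - ⟨y, c⟩ -
    have hzb := (hC b b y).1
    have hzc' : (φ c x * x⁻¹)⁻¹ ∈ Subgroup.center X := Subgroup.inv_mem _ (hC c c x).1
    have hxy : ⁅x, y⁆ ∈ Subgroup.center X :=
      hX (Subgroup.commutator_mem_commutator (Subgroup.mem_top _) (Subgroup.mem_top _))
    have hL : x * φ b y * φ (b * c * b⁻¹) x⁻¹ * φ (b * c * b⁻¹ * c⁻¹) y⁻¹
        = (φ b y * y⁻¹) * ((φ c x * x⁻¹)⁻¹ * ⁅x, y⁆) := by
      rw [aux_commutator_act φ hC, aux_conj φ hC, map_inv, commutatorElement_def]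
      revert hzb hzc'
      generalize φ b y = a
      generalize φ c x = d
      intro hzb hzc'
      rw [show a = (a * y⁻¹) * y from (inv_mul_cancel_right _ _).symm,
        show d⁻¹ = x⁻¹ * (d * x⁻¹)⁻¹ by group]
      revert hzb hzc'
      generalize a * y⁻¹ = p
      generalize (d * x⁻¹)⁻¹ = q
      intro hp hq
      simp only [mul_assoc]
      rw [cen_move p hp x (y * (x⁻¹ * (q * y⁻¹))), cen_move q hq x⁻¹ y⁻¹,
        cen_move q hq y (x⁻¹ * y⁻¹), cen_move q hq x (y * (x⁻¹ * y⁻¹)), mul_inv_cancel_left]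
    rw [sdp_commutator_eq, hL, Subgroup.mem_center_iff]
    rintro ⟨w, e⟩
    have f1 : φ e (φ b y * y⁻¹) = φ b y * y⁻¹ := (hC b e y).2
    have f2 : φ e ((φ c x * x⁻¹)⁻¹) = (φ c x * x⁻¹)⁻¹ := by
      rw [map_inv, (hC c e x).2]
    have f3 : φ e ⁅x, y⁆ = ⁅x, y⁆ := by
      have h1 : φ e ⁅x, y⁆ = ⁅φ e x, φ e y⁆ := by
        simp [commutatorElement_def, map_mul, map_inv, mul_assoc]
      rw [h1, show φ e x = (φ e x * x⁻¹) * x from (inv_mul_cancel_right _ _).symm,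
        show φ e y = (φ e y * y⁻¹) * y from (inv_mul_cancel_right _ _).symm,
        cen_commutator _ _ _ _ (hC e e x).1 (hC e e y).1]
    have hLfix : φ e ((φ b y * y⁻¹) * ((φ c x * x⁻¹)⁻¹ * ⁅x, y⁆)) =
        (φ b y * y⁻¹) * ((φ c x * x⁻¹)⁻¹ * ⁅x, y⁆) := by
      rw [map_mul, f1, map_mul, f2, f3]
    have hLcen : (φ b y * y⁻¹) * ((φ c x * x⁻¹)⁻¹ * ⁅x, y⁆) ∈ Subgroup.center X :=
      Subgroup.mul_mem _ hzb (Subgroup.mul_mem _ hzc' hxy)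
    have hBc : ⁅b, c⁆ ∈ Subgroup.center B :=
      hB (Subgroup.commutator_mem_commutator (Subgroup.mem_top _) (Subgroup.mem_top _))
    ext
    · show w * φ e _ = _ * φ ⁅b, c⁆ w
      rw [hLfix, show φ ⁅b, c⁆ w = w from aux_commutator_act φ hC b c w,
        Subgroup.mem_center_iff.mp hLcen w]
    · show e * ⁅b, c⁆ = ⁅b, c⁆ * e
      exact Subgroup.mem_center_iff.mp hBc e
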